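/- Let F be a linearly ordered field with integer part I, let α, β ∈ F be distinct irrationals with α, β > 1, and let a, b, c, d ∈ I^{≥0} be such that a·α^{−1} + b·β^{−1} = 1 and c·(1 − α^{−1}) + d·(1 − β^{−1}) = 1. Then a = b = c = d = 1, and consequently α^{−1} + β^{−1} = 1. -/

import Mathlib

/-- `N_α`: the set `{⌊n·α⌋ : n ∈ I, n ≥ 0}`, where `fl` is the floor function
associated to the integer part `I` of `F`. -/
def Nset {F : Type*} [Field F] [LinearOrder F] [IsStrictOrderedRing F] (I : Subring F) (fl : F → F) (α : F) : Set F :=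
  {y | ∃ n, n ∈ I ∧ 0 ≤ n ∧ y = fl (n * α)}

/-- An element of `F` is rational (with respect to `I`) if it lies in the
fraction field of `I` viewed inside `F`. -/
def IsRat {F : Type*} [Field F] [LinearOrder F] [IsStrictOrderedRing F] (I : Subring F) (α : F) : Prop :=
  ∃ p ∈ I, ∃ q ∈ I, q ≠ 0 ∧ α = p / q

theorem stmt_11 {F : Type*} [Field F] [LinearOrder F] [IsStrictOrderedRing F] (I : Subring F) (fl : F → F)
    (hdisc : ∀ x ∈ I, ¬(0 < x ∧ x < 1))
    (hfl : ∀ x : F, fl x ∈ I ∧ fl x ≤ x ∧ x < fl x + 1)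
    (α β : F) (hα1 : 1 < α) (hβ1 : 1 < β)
    (hαirr : ¬ IsRat I α) (hβirr : ¬ IsRat I β) (hne : α ≠ β)
    (a b c d : F) (ha : a ∈ I) (hb : b ∈ I) (hc : c ∈ I) (hd : d ∈ I)
    (ha0 : 0 ≤ a) (hb0 : 0 ≤ b) (hc0 : 0 ≤ c) (hd0 : 0 ≤ d)
    (hab : a * α⁻¹ + b * β⁻¹ = 1)
    (hcd : c * (1 - α⁻¹) + d * (1 - β⁻¹) = 1) :
    a = 1 ∧ b = 1 ∧ c = 1 ∧ d = 1 ∧ α⁻¹ + β⁻¹ = 1 := by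
  have hα0 : (0:F) < α := lt_trans one_pos hα1
  have hβ0 : (0:F) < β := lt_trans one_pos hβ1
  have hαi : (0:F) < α⁻¹ := inv_pos.mpr hα0
  have hβi : (0:F) < β⁻¹ := inv_pos.mpr hβ0
  have hαi1 : α⁻¹ < 1 := inv_lt_one_of_one_lt₀ hα1
  have hβi1 : β⁻¹ < 1 := inv_lt_one_of_one_lt₀ hβ1
  -- elements of I that are ≥ 0 and ≠ 0 are ≥ 1
  have hge1 : ∀ x ∈ I, 0 ≤ x → x ≠ 0 → 1 ≤ x := by
    intro x hxI hx0 hxne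
    by_contra h
    exact hdisc x hxI ⟨lt_of_le_of_ne hx0 (Ne.symm hxne), not_le.mp h⟩
  have ha1 : 1 ≤ a := by
    refine hge1 a ha ha0 ?_
    intro h
    subst h
    rw [zero_mul, zero_add] at hab
    have hinv : β⁻¹ * β = 1 := inv_mul_cancel₀ hβ0.ne'
    have : β = b := by
      have h2 : b * β⁻¹ * β = 1 * β := by rw [hab]
      linear_combination -h2 + b * hinv
    exact hβirr ⟨b, hb, 1, I.one_mem, one_ne_zero, by rw [div_one]; exact this⟩
  have hb1 : 1 ≤ b := by
    refine hge1 b hb hb0 ?_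
    intro h
    subst h
    rw [zero_mul, add_zero] at hab
    have hinv : α⁻¹ * α = 1 := inv_mul_cancel₀ hα0.ne'
    have : α = a := by
      have h2 : a * α⁻¹ * α = 1 * α := by rw [hab]
      linear_combination -h2 + a * hinv
    exact hαirr ⟨a, ha, 1, I.one_mem, one_ne_zero, by rw [div_one]; exact this⟩
  have hc1 : 1 ≤ c := by
    refine hge1 c hc hc0 ?_
    intro h
    subst h
    -- d * (1 - β⁻¹) = 1
    have hcd' : d * (1 - β⁻¹) = 1 := by linarith
    have hd1 : d ≠ 1 := by
      intro h1
      rw [h1, one_mul] at hcd'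
      have : β⁻¹ = 0 := by linarith
      exact hβi.ne' this
    have hdne : d ≠ 0 := by
      intro h0; rw [h0, zero_mul] at hcd'; exact one_ne_zero hcd'.symm
    have hdm1 : d - 1 ≠ 0 := sub_ne_zero.mpr hd1
    have hinv : β⁻¹ * β = 1 := inv_mul_cancel₀ hβ0.ne'
    have : β = d / (d - 1) := by
      rw [eq_div_iff hdm1]
      have h2 : d * (1 - β⁻¹) * β = 1 * β := by rw [hcd']
      linear_combination h2 + d * hinv
    exact hβirr ⟨d, hd, d - 1, I.sub_mem hd I.one_mem, hdm1, this⟩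
  have hd1 : 1 ≤ d := by
    refine hge1 d hd hd0 ?_
    intro h
    subst h
    have hcd' : c * (1 - α⁻¹) = 1 := by linarith
    have hc1' : c ≠ 1 := by
      intro h1
      rw [h1, one_mul] at hcd'
      have : α⁻¹ = 0 := by linarith
      exact hαi.ne' this
    have hcne : c ≠ 0 := by
      intro h0; rw [h0, zero_mul] at hcd'; exact one_ne_zero hcd'.symm
    have hcm1 : c - 1 ≠ 0 := sub_ne_zero.mpr hc1'
    have hinv : α⁻¹ * α = 1 := inv_mul_cancel₀ hα0.ne'
    have : α = c / (c - 1) := by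
      rw [eq_div_iff hcm1]
      have h2 : c * (1 - α⁻¹) * α = 1 * α := by rw [hcd']
      linear_combination h2 + c * hinv
    exact hαirr ⟨c, hc, c - 1, I.sub_mem hc I.one_mem, hcm1, this⟩
  -- the four slack terms sum to zero and are each nonnegative
  have key : (a - 1) * α⁻¹ + (b - 1) * β⁻¹ + (c - 1) * (1 - α⁻¹) + (d - 1) * (1 - β⁻¹) = 0 := by
    linear_combination hab + hcd
  have t1 : 0 ≤ (a - 1) * α⁻¹ := mul_nonneg (by linarith) hαi.le
  have t2 : 0 ≤ (b - 1) * β⁻¹ := mul_nonneg (by linarith) hβi.le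
  have t3 : 0 ≤ (c - 1) * (1 - α⁻¹) := mul_nonneg (by linarith) (by linarith)
  have t4 : 0 ≤ (d - 1) * (1 - β⁻¹) := mul_nonneg (by linarith) (by linarith)
  have e1 : (a - 1) * α⁻¹ = 0 := by linarith
  have e2 : (b - 1) * β⁻¹ = 0 := by linarith
  have e3 : (c - 1) * (1 - α⁻¹) = 0 := by linarith
  have e4 : (d - 1) * (1 - β⁻¹) = 0 := by linarith
  have ea : a = 1 := by
    rcases mul_eq_zero.mp e1 with h | h
    · linarith
    · exact absurd h hαi.ne'
  have eb : b = 1 := by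
    rcases mul_eq_zero.mp e2 with h | h
    · linarith
    · exact absurd h hβi.ne'
  have ec : c = 1 := by
    rcases mul_eq_zero.mp e3 with h | h
    · linarith
    · exact absurd h (by linarith : (1:F) - α⁻¹ ≠ 0)
  have ed : d = 1 := by
    rcases mul_eq_zero.mp e4 with h | h
    · linarith
    · exact absurd h (by linarith : (1:F) - β⁻¹ ≠ 0)
  subst ea eb
  refine ⟨rfl, rfl, ec, ed, by linarith⟩
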